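/- arXiv:2512.13589 — 2 statements merged into one kernel-verified Lean document; each statement's English description precedes it below -/
import Mathlib

section
/- Robustness of non-uniform bounded growth under exponentially decaying perturbations (forward direction): suppose the transition matrix of ẋ = A(t)x satisfies ‖Φ_A(t,s)‖ ≤ K₀ e^{a|t−s|} e^{ε|s|} for all t,s, and P : ℝ → M_n(ℝ) is continuous with ‖P(t)‖ ≤ 𝒫 e^{−p|t|} for all t with p > ε. Then the transition matrix Φ̃ of ẋ = (A(t)+P(t))x satisfies ‖Φ̃(t₂,t₁)‖ ≤ K₀ e^{(a+K₀𝒫)(t₂−t₁)+ε|t₁|} for all t₂ ≥ t₁. -/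
open Matrix
open scoped Matrix.Norms.L2Operator

/-- Robustness of non-uniform bounded growth under exponentially decaying
perturbations (forward direction): if `‖Φ_A(t,s)‖ ≤ K₀ e^{a|t−s|} e^{ε|s|}` and
`‖P(t)‖ ≤ Pb e^{−p|t|}` with `p > ε`, then the perturbed transition matrix satisfies
`‖Φ̃(t₂,t₁)‖ ≤ K₀ e^{(a+K₀Pb)(t₂−t₁)+ε|t₁|}` for all `t₂ ≥ t₁`. -/
theorem nonuniform_bounded_growth_perturbation_forward
    (n : ℕ) (ΦA Φt : ℝ → ℝ → Matrix (Fin n) (Fin n) ℝ)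
    (P : ℝ → Matrix (Fin n) (Fin n) ℝ)
    (K₀ a ε Pb p : ℝ)
    (hK₀ : 0 < K₀) (ha : 0 < a) (hε : 0 < ε) (hPb : 0 < Pb) (hp : 0 < p)
    (hpε : p > ε)
    (hΦAcont : Continuous fun q : ℝ × ℝ => ΦA q.1 q.2)
    (hΦtcont : Continuous fun q : ℝ × ℝ => Φt q.1 q.2)
    (hPcont : Continuous P)
    (hΦA : ∀ t s, ‖ΦA t s‖ ≤ K₀ * Real.exp (a * |t - s|) * Real.exp (ε * |s|))
    (hP : ∀ t, ‖P t‖ ≤ Pb * Real.exp (-p * |t|))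
    (hvoc : ∀ t₁ t₂, t₁ ≤ t₂ →
      Φt t₂ t₁ = ΦA t₂ t₁ + ∫ s in t₁..t₂, ΦA t₂ s * P s * Φt s t₁) :
    ∀ t₁ t₂, t₁ ≤ t₂ →
      ‖Φt t₂ t₁‖ ≤ K₀ * Real.exp ((a + K₀ * Pb) * (t₂ - t₁) + ε * |t₁|) := by
  intro t₁ t₂ ht
  set L : ℝ := K₀ * Pb with hL
  set C : ℝ := K₀ * Real.exp (ε * |t₁|) with hC
  have hLpos : 0 < L := mul_pos hK₀ hPb
  have hCpos : 0 < C := mul_pos hK₀ (Real.exp_pos _)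
  set u : ℝ → ℝ := fun t => ‖Φt t t₁‖ * Real.exp (-(a * (t - t₁))) with hu
  have hucont : Continuous u := by
    apply Continuous.mul
    · exact (hΦtcont.comp (continuous_id.prodMk continuous_const)).norm
    · exact Real.continuous_exp.comp (by continuity)
  have hunn : ∀ t, 0 ≤ u t := fun t => mul_nonneg (norm_nonneg _) (Real.exp_pos _).le
  set v : ℝ → ℝ := fun t => ∫ s in t₁..t, u s with hv
  have hvderiv : ∀ t : ℝ, HasDerivAt v (u t) t := fun t =>
    intervalIntegral.integral_hasDerivAt_right (hucont.intervalIntegrable _ _)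
      (hucont.stronglyMeasurable.stronglyMeasurableAtFilter) hucont.continuousAt
  have hvnn : ∀ t ∈ Set.Icc t₁ t₂, 0 ≤ v t := fun t htt =>
    intervalIntegral.integral_nonneg htt.1 (fun s _ => hunn s)
  -- key integral inequality
  have key : ∀ t ∈ Set.Icc t₁ t₂, u t ≤ C + L * v t := by
    intro t htt
    obtain ⟨h1, _⟩ := htt
    have hInt : Continuous fun s => ΦA t s * P s * Φt s t₁ := by
      apply Continuous.mul
      · exact (hΦAcont.comp (continuous_const.prodMk continuous_id)).mul hPcont
      · exact hΦtcont.comp (continuous_id.prodMk continuous_const)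
    have hbound : ∀ s ∈ Set.Icc t₁ t,
        ‖ΦA t s * P s * Φt s t₁‖ ≤ L * Real.exp (a * (t - s)) * ‖Φt s t₁‖ := by
      intro s hs
      have hst : s ≤ t := hs.2
      have h5 : ‖ΦA t s * P s * Φt s t₁‖ ≤ ‖ΦA t s‖ * ‖P s‖ * ‖Φt s t₁‖ :=
        le_trans (norm_mul_le _ _) (mul_le_mul_of_nonneg_right (norm_mul_le _ _) (norm_nonneg _))
      have h6 : ‖ΦA t s‖ * ‖P s‖ ≤ L * Real.exp (a * (t - s)) := by
        have hA := hΦA t s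
        rw [abs_of_nonneg (sub_nonneg.2 hst)] at hA
        have hp' := hP s
        calc ‖ΦA t s‖ * ‖P s‖
            ≤ (K₀ * Real.exp (a * (t - s)) * Real.exp (ε * |s|)) * (Pb * Real.exp (-p * |s|)) := by
              apply mul_le_mul hA hp' (norm_nonneg _)
              positivity
          _ = L * Real.exp (a * (t - s)) * (Real.exp (ε * |s|) * Real.exp (-p * |s|)) := by
              rw [hL]; ring
          _ = L * Real.exp (a * (t - s)) * Real.exp ((ε - p) * |s|) := by
              rw [← Real.exp_add]; congr 1; ring
          _ ≤ L * Real.exp (a * (t - s)) * 1 := by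
              apply mul_le_mul_of_nonneg_left _ (by positivity)
              apply Real.exp_le_one_iff.2
              have : ε - p ≤ 0 := by linarith
              exact mul_nonpos_of_nonpos_of_nonneg this (abs_nonneg _)
          _ = L * Real.exp (a * (t - s)) := mul_one _
      calc ‖ΦA t s * P s * Φt s t₁‖ ≤ ‖ΦA t s‖ * ‖P s‖ * ‖Φt s t₁‖ := h5
        _ ≤ L * Real.exp (a * (t - s)) * ‖Φt s t₁‖ :=
            mul_le_mul_of_nonneg_right h6 (norm_nonneg _)
    have h3 : ‖Φt t t₁‖ ≤ K₀ * Real.exp (a * (t - t₁)) * Real.exp (ε * |t₁|)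
        + ∫ s in t₁..t, L * Real.exp (a * (t - s)) * ‖Φt s t₁‖ := by
      rw [hvoc t₁ t h1]
      refine (norm_add_le _ _).trans (add_le_add ?_ ?_)
      · have := hΦA t t₁; rwa [abs_of_nonneg (sub_nonneg.2 h1)] at this
      · refine (intervalIntegral.norm_integral_le_integral_norm h1).trans ?_
        apply intervalIntegral.integral_mono_on h1
        · exact hInt.norm.intervalIntegrable _ _
        · have hcomp : Continuous fun s : ℝ => L * Real.exp (a * (t - s)) * ‖Φt s t₁‖ := by
            apply Continuous.mul
            · exact continuous_const.mul (Real.continuous_exp.comp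
                (continuous_const.mul (continuous_const.sub continuous_id)))
            · exact (hΦtcont.comp (continuous_id.prodMk continuous_const)).norm
          exact hcomp.intervalIntegrable _ _
        · exact hbound
    have he : (0:ℝ) < Real.exp (-(a * (t - t₁))) := Real.exp_pos _
    have h4 := mul_le_mul_of_nonneg_right h3 he.le
    have e1 : K₀ * Real.exp (a * (t - t₁)) * Real.exp (ε * |t₁|) * Real.exp (-(a * (t - t₁))) = C := by
      calc K₀ * Real.exp (a * (t - t₁)) * Real.exp (ε * |t₁|) * Real.exp (-(a * (t - t₁)))
          = K₀ * Real.exp (ε * |t₁|) * (Real.exp (a * (t - t₁)) * Real.exp (-(a * (t - t₁)))) := by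
            ring
        _ = C := by rw [← Real.exp_add, add_neg_cancel, Real.exp_zero, mul_one, hC]
    have e2 : (∫ s in t₁..t, L * Real.exp (a * (t - s)) * ‖Φt s t₁‖) * Real.exp (-(a * (t - t₁)))
        = L * v t := by
      rw [hv, mul_comm, ← intervalIntegral.integral_const_mul, ← intervalIntegral.integral_const_mul]
      apply intervalIntegral.integral_congr
      intro s _
      show Real.exp (-(a * (t - t₁))) * (L * Real.exp (a * (t - s)) * ‖Φt s t₁‖)
          = L * (‖Φt s t₁‖ * Real.exp (-(a * (s - t₁))))
      have hee : Real.exp (-(a * (t - t₁))) * Real.exp (a * (t - s))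
          = Real.exp (-(a * (s - t₁))) := by
        rw [← Real.exp_add]; ring_nf
      calc Real.exp (-(a * (t - t₁))) * (L * Real.exp (a * (t - s)) * ‖Φt s t₁‖)
          = L * ‖Φt s t₁‖ * (Real.exp (-(a * (t - t₁))) * Real.exp (a * (t - s))) := by ring
        _ = L * (‖Φt s t₁‖ * Real.exp (-(a * (s - t₁)))) := by rw [hee]; ring
    calc u t = ‖Φt t t₁‖ * Real.exp (-(a * (t - t₁))) := rfl
      _ ≤ (K₀ * Real.exp (a * (t - t₁)) * Real.exp (ε * |t₁|)
            + ∫ s in t₁..t, L * Real.exp (a * (t - s)) * ‖Φt s t₁‖)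
            * Real.exp (-(a * (t - t₁))) := h4
      _ = C + L * v t := by rw [add_mul, e1, e2]
  -- Gronwall via integral
  have hgron : ∀ x ∈ Set.Icc t₁ t₂, ‖v x‖ ≤ gronwallBound 0 L C (x - t₁) := by
    apply norm_le_gronwallBound_of_norm_deriv_right_le
    · exact fun x _ => ((hvderiv x).continuousAt).continuousWithinAt
    · intro x _
      exact (hvderiv x).hasDerivWithinAt
    · simp [hv]
    · intro x hx
      have hx' : x ∈ Set.Icc t₁ t₂ := ⟨hx.1, hx.2.le⟩
      rw [Real.norm_of_nonneg (hunn x), Real.norm_of_nonneg (hvnn x hx')]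
      linarith [key x hx']
  have hvt2 := hgron t₂ ⟨ht, le_refl _⟩
  rw [gronwallBound_of_K_ne_0 hLpos.ne', Real.norm_of_nonneg (hvnn t₂ ⟨ht, le_refl _⟩)] at hvt2
  have hut2 : u t₂ ≤ C * Real.exp (L * (t₂ - t₁)) := by
    have := key t₂ ⟨ht, le_refl _⟩
    have h7 : L * v t₂ ≤ C * (Real.exp (L * (t₂ - t₁)) - 1) := by
      have := mul_le_mul_of_nonneg_left hvt2 hLpos.le
      calc L * v t₂ ≤ L * (0 * Real.exp (L * (t₂ - t₁)) + C / L * (Real.exp (L * (t₂ - t₁)) - 1)) := this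
        _ = C * (Real.exp (L * (t₂ - t₁)) - 1) := by field_simp; ring
    nlinarith [Real.exp_pos (L * (t₂ - t₁))]
  have hfin : ‖Φt t₂ t₁‖ = u t₂ * Real.exp (a * (t₂ - t₁)) := by
    show ‖Φt t₂ t₁‖ = ‖Φt t₂ t₁‖ * Real.exp (-(a * (t₂ - t₁))) * Real.exp (a * (t₂ - t₁))
    rw [mul_assoc, ← Real.exp_add, neg_add_cancel, Real.exp_zero, mul_one]
  rw [hfin]
  calc u t₂ * Real.exp (a * (t₂ - t₁))
      ≤ C * Real.exp (L * (t₂ - t₁)) * Real.exp (a * (t₂ - t₁)) :=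
        mul_le_mul_of_nonneg_right hut2 (Real.exp_pos _).le
    _ = K₀ * Real.exp ((a + K₀ * Pb) * (t₂ - t₁) + ε * |t₁|) := by
        rw [hC, hL, mul_assoc, mul_assoc, ← Real.exp_add, ← Real.exp_add]
        congr 1; ring
end

section
/- Robustness of non-uniform bounded growth under exponentially decaying perturbations (backward direction): under the same hypotheses as the forward case (‖Φ_A(t,s)‖ ≤ K₀ e^{a|t−s|} e^{ε|s|}, ‖P(t)‖ ≤ 𝒫 e^{−p|t|}, p > ε), the transition matrix Φ̃ of ẋ = (A(t)+P(t))x satisfies ‖Φ̃(t₂,t₁)‖ ≤ K₀ e^{(a+K₀𝒫)(t₁−t₂)+ε|t₁|} for all t₂ ≤ t₁. -/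
open Matrix
open scoped Matrix.Norms.L2Operator

/-- Backward Grönwall inequality in integral form. -/
lemma gronwall_backward (v : ℝ → ℝ) (hv : Continuous v) (B k t₁ : ℝ)
    (hk : 0 ≤ k)
    (h : ∀ t, t ≤ t₁ → v t ≤ B + ∫ s in t..t₁, k * v s) :
    ∀ t, t ≤ t₁ → v t ≤ B * Real.exp (k * (t₁ - t)) := by
  intro t ht
  set R : ℝ → ℝ := fun u => ∫ s in u..t₁, k * v s with hR
  have hkv : Continuous fun s => k * v s := continuous_const.mul hv
  have hRderiv : ∀ x : ℝ, HasDerivAt R (-(k * v x)) x := fun x =>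
    intervalIntegral.integral_hasDerivAt_left (hkv.intervalIntegrable _ _)
      (hkv.stronglyMeasurableAtFilter _ _) hkv.continuousAt
  set F : ℝ → ℝ := fun x => (B + R x) * Real.exp (k * x) with hF
  have hFderiv : ∀ x : ℝ, HasDerivAt F
      (-(k * v x) * Real.exp (k * x) + (B + R x) * (Real.exp (k * x) * k)) x := by
    intro x
    have he : HasDerivAt (fun x : ℝ => Real.exp (k * x)) (Real.exp (k * x) * k) x := by
      simpa using ((hasDerivAt_id x).const_mul k).exp
    have := ((hRderiv x).const_add B).mul he
    exact this
  have hmono : MonotoneOn F (Set.Icc t t₁) := by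
    apply monotoneOn_of_deriv_nonneg (convex_Icc t t₁)
    · exact fun x _ => (hFderiv x).continuousAt.continuousWithinAt
    · exact fun x _ => (hFderiv x).differentiableAt.differentiableWithinAt
    · intro x hx
      rw [(hFderiv x).deriv]
      have hx' : x ≤ t₁ := (interior_subset hx).2
      have hvx : v x ≤ B + R x := h x hx'
      have hexp : (0:ℝ) < Real.exp (k * x) := Real.exp_pos _
      nlinarith [mul_le_mul_of_nonneg_left hvx hk]
  have hFt : F t ≤ F t₁ := hmono ⟨le_refl t, ht⟩ ⟨ht, le_refl t₁⟩ ht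
  have hRt₁ : R t₁ = 0 := intervalIntegral.integral_same
  have h2 : (B + R t) * Real.exp (k * t) ≤ B * Real.exp (k * t₁) := by
    simpa [hF, hRt₁] using hFt
  have h1 : v t ≤ B + R t := h t ht
  have h3 : v t * Real.exp (k * t) ≤ B * Real.exp (k * t₁) := by
    calc v t * Real.exp (k * t) ≤ (B + R t) * Real.exp (k * t) :=
          mul_le_mul_of_nonneg_right h1 (Real.exp_pos _).le
      _ ≤ B * Real.exp (k * t₁) := h2
  have hrw : B * Real.exp (k * (t₁ - t)) = B * Real.exp (k * t₁) / Real.exp (k * t) := by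
    rw [show k * (t₁ - t) = k * t₁ - k * t by ring, Real.exp_sub]
    ring
  rw [hrw, le_div_iff₀ (Real.exp_pos _)]
  exact h3

/-- Robustness of non-uniform bounded growth under exponentially decaying
perturbations (backward direction): if `‖Φ_A(t,s)‖ ≤ K₀ e^{a|t−s|} e^{ε|s|}` and
`‖P(t)‖ ≤ Pb e^{−p|t|}` with `p > ε`, then the perturbed transition matrix satisfies
`‖Φ̃(t₂,t₁)‖ ≤ K₀ e^{(a+K₀Pb)(t₁−t₂)+ε|t₁|}` for all `t₂ ≤ t₁`. -/
theorem nonuniform_bounded_growth_perturbation_backward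
    (n : ℕ) (ΦA Φt : ℝ → ℝ → Matrix (Fin n) (Fin n) ℝ)
    (P : ℝ → Matrix (Fin n) (Fin n) ℝ)
    (K₀ a ε Pb p : ℝ)
    (hK₀ : 0 < K₀) (ha : 0 < a) (hε : 0 < ε) (hPb : 0 < Pb) (hp : 0 < p)
    (hpε : p > ε)
    (hΦAcont : Continuous fun q : ℝ × ℝ => ΦA q.1 q.2)
    (hΦtcont : Continuous fun q : ℝ × ℝ => Φt q.1 q.2)
    (hPcont : Continuous P)
    (hΦA : ∀ t s, ‖ΦA t s‖ ≤ K₀ * Real.exp (a * |t - s|) * Real.exp (ε * |s|))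
    (hP : ∀ t, ‖P t‖ ≤ Pb * Real.exp (-p * |t|))
    (hvoc : ∀ t₁ t₂, t₂ ≤ t₁ →
      Φt t₂ t₁ = ΦA t₂ t₁ + ∫ s in t₂..t₁, ΦA t₂ s * P s * Φt s t₁) :
    ∀ t₁ t₂, t₂ ≤ t₁ →
      ‖Φt t₂ t₁‖ ≤ K₀ * Real.exp ((a + K₀ * Pb) * (t₁ - t₂) + ε * |t₁|) := by
  intro t₁ t₂ ht
  set k : ℝ := K₀ * Pb with hk
  set B : ℝ := K₀ * Real.exp (a * t₁ + ε * |t₁|) with hB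
  have hucont : Continuous fun t => ‖Φt t t₁‖ :=
    (hΦtcont.comp (continuous_id.prodMk continuous_const)).norm
  set v : ℝ → ℝ := fun t => Real.exp (a * t) * ‖Φt t t₁‖ with hv
  have hvcont : Continuous v :=
    (Real.continuous_exp.comp (continuous_const.mul continuous_id)).mul hucont
  -- the key integral inequality
  have hkey : ∀ t, t ≤ t₁ → v t ≤ B + ∫ s in t..t₁, k * v s := by
    intro t ht'
    have hvoc' := hvoc t₁ t ht'
    have hnorm : ‖Φt t t₁‖ ≤ ‖ΦA t t₁‖ + ‖∫ s in t..t₁, ΦA t s * P s * Φt s t₁‖ := by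
      rw [hvoc']; exact norm_add_le _ _
    -- continuity of the integrand
    have hintcont : Continuous fun s => ΦA t s * P s * Φt s t₁ := by
      have h1 : Continuous fun s => ΦA t s :=
        hΦAcont.comp (continuous_const.prodMk continuous_id)
      have h2 : Continuous fun s => Φt s t₁ :=
        hΦtcont.comp (continuous_id.prodMk continuous_const)
      exact (h1.mul hPcont).mul h2
    have hIB : ‖∫ s in t..t₁, ΦA t s * P s * Φt s t₁‖ ≤
        ∫ s in t..t₁, K₀ * Real.exp (a * (s - t)) * Pb * ‖Φt s t₁‖ := by
      have h1 : ‖∫ s in t..t₁, ΦA t s * P s * Φt s t₁‖ ≤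
          ∫ s in t..t₁, ‖ΦA t s * P s * Φt s t₁‖ :=
        intervalIntegral.norm_integral_le_integral_norm ht'
      refine h1.trans (intervalIntegral.integral_mono_on ht'
        (hintcont.norm.intervalIntegrable _ _)
        (((((continuous_const.mul (Real.continuous_exp.comp
          (continuous_const.mul (continuous_id.sub continuous_const)))).mul
          continuous_const).mul hucont).intervalIntegrable _ _)) ?_)
      intro s hs
      have hts : t ≤ s := hs.1
      have hmul : ‖ΦA t s * P s * Φt s t₁‖ ≤ ‖ΦA t s‖ * ‖P s‖ * ‖Φt s t₁‖ :=
        (norm_mul_le _ _).trans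
          (mul_le_mul_of_nonneg_right (norm_mul_le _ _) (norm_nonneg _))
      have hA : ‖ΦA t s‖ ≤ K₀ * Real.exp (a * (s - t)) * Real.exp (ε * |s|) := by
        have := hΦA t s
        rwa [show |t - s| = s - t by rw [abs_sub_comm]; exact abs_of_nonneg (by linarith)]
          at this
      have hPs := hP s
      have hdecay : Real.exp (ε * |s|) * Real.exp (-p * |s|) ≤ 1 := by
        rw [← Real.exp_add, Real.exp_le_one_iff]
        nlinarith [abs_nonneg s]
      calc ‖ΦA t s * P s * Φt s t₁‖ ≤ ‖ΦA t s‖ * ‖P s‖ * ‖Φt s t₁‖ := hmul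
        _ ≤ (K₀ * Real.exp (a * (s - t)) * Real.exp (ε * |s|)) *
              (Pb * Real.exp (-p * |s|)) * ‖Φt s t₁‖ := by
            apply mul_le_mul_of_nonneg_right _ (norm_nonneg _)
            apply mul_le_mul hA hPs (norm_nonneg _)
            positivity
        _ = (K₀ * Real.exp (a * (s - t)) * Pb * ‖Φt s t₁‖) *
              (Real.exp (ε * |s|) * Real.exp (-p * |s|)) := by ring
        _ ≤ (K₀ * Real.exp (a * (s - t)) * Pb * ‖Φt s t₁‖) * 1 := by
            apply mul_le_mul_of_nonneg_left hdecay
            positivity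
        _ = K₀ * Real.exp (a * (s - t)) * Pb * ‖Φt s t₁‖ := by ring
    have hAtt₁ : ‖ΦA t t₁‖ ≤ K₀ * Real.exp (a * (t₁ - t)) * Real.exp (ε * |t₁|) := by
      have := hΦA t t₁
      rwa [show |t - t₁| = t₁ - t by rw [abs_sub_comm]; exact abs_of_nonneg (by linarith)]
        at this
    have hu : ‖Φt t t₁‖ ≤ K₀ * Real.exp (a * (t₁ - t)) * Real.exp (ε * |t₁|) +
        ∫ s in t..t₁, K₀ * Real.exp (a * (s - t)) * Pb * ‖Φt s t₁‖ := by
      linarith [hnorm, hIB, hAtt₁]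
    have hexpat : (0:ℝ) < Real.exp (a * t) := Real.exp_pos _
    have hmul := mul_le_mul_of_nonneg_left hu hexpat.le
    have hint : Real.exp (a * t) *
        ∫ s in t..t₁, K₀ * Real.exp (a * (s - t)) * Pb * ‖Φt s t₁‖ =
        ∫ s in t..t₁, k * v s := by
      rw [← intervalIntegral.integral_const_mul]
      apply intervalIntegral.integral_congr
      intro s _
      simp only [hv, hk]
      rw [show a * s = a * t + a * (s - t) by ring, Real.exp_add]
      ring
    have hB' : Real.exp (a * t) * (K₀ * Real.exp (a * (t₁ - t)) * Real.exp (ε * |t₁|)) = B := by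
      rw [hB, show a * t₁ + ε * |t₁| = a * t + (a * (t₁ - t) + ε * |t₁|) by ring,
        Real.exp_add, Real.exp_add]
      ring
    calc v t = Real.exp (a * t) * ‖Φt t t₁‖ := rfl
      _ ≤ Real.exp (a * t) * (K₀ * Real.exp (a * (t₁ - t)) * Real.exp (ε * |t₁|) +
            ∫ s in t..t₁, K₀ * Real.exp (a * (s - t)) * Pb * ‖Φt s t₁‖) := hmul
      _ = B + ∫ s in t..t₁, k * v s := by rw [mul_add, hint, hB']
  have hgron := gronwall_backward v hvcont B k t₁ (by positivity) hkey t₂ ht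
  -- unfold: v t₂ = e^{a t₂} ‖Φt t₂ t₁‖ ≤ B e^{k (t₁ - t₂)}
  have hfin : Real.exp (a * t₂) * ‖Φt t₂ t₁‖ ≤
      K₀ * Real.exp (a * t₁ + ε * |t₁|) * Real.exp (k * (t₁ - t₂)) := hgron
  have hexp : (0:ℝ) < Real.exp (a * t₂) := Real.exp_pos _
  rw [show (a + K₀ * Pb) * (t₁ - t₂) + ε * |t₁| =
      (a * t₁ + ε * |t₁|) + k * (t₁ - t₂) - a * t₂ by rw [hk]; ring,
    Real.exp_sub, Real.exp_add, ← mul_div_assoc, ← mul_assoc, le_div_iff₀ hexp]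
  nlinarith [hfin]
end
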